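/- Let m ∈ (0,4] and α > 0, and let f be a four-times continuously differentiable positive solution of the self-similar profile equation α·(f − y f') + m f^{m−1} f' f''' + f^m f'''' = 0 on an open interval I ⊆ (0,∞). Define E₁(y) := α·( f(y)·f'(y) − (1/2)·y·f'(y)² ) + f(y)^m · f''(y) · f'''(y). Then E₁ is differentiable on I with E₁'(y) = (α/2)·f'(y)² + f(y)^m·f'''(y)² for all y ∈ I. Moreover, if f is a positive four-times continuously differentiable solution on [0, Y) (Y > 0) with initial conditions f(0) = 1, f'(0) = 0, f''(0) = κ, f'''(0) = 0, then E₁(y) → 0 as y → 0⁺ and E₁(y) > 0 for every y ∈ (0, Y). -/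

import Mathlib

open Set Filter Topology MeasureTheory

noncomputable section

/-- `f` is four-times continuously differentiable on `s`, with successive
derivatives `f1`, `f2`, `f3`, `f4`. -/
def C4On (s : Set ℝ) (f f1 f2 f3 f4 : ℝ → ℝ) : Prop :=
  (∀ y ∈ s, HasDerivWithinAt f (f1 y) s y) ∧
  (∀ y ∈ s, HasDerivWithinAt f1 (f2 y) s y) ∧
  (∀ y ∈ s, HasDerivWithinAt f2 (f3 y) s y) ∧
  (∀ y ∈ s, HasDerivWithinAt f3 (f4 y) s y) ∧
  ContinuousOn f4 s

/-- The self-similar profile ODE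
`α (f − y f') + m f^(m−1) f' f''' + f^m f'''' = 0` on the set `s`,
for a function `f` with successive derivatives `f1`, `f3`, `f4`. -/
def ProfileODE (m α : ℝ) (s : Set ℝ) (f f1 f3 f4 : ℝ → ℝ) : Prop :=
  ∀ y ∈ s,
    α * (f y - y * f1 y) + m * f y ^ (m - 1) * f1 y * f3 y + f y ^ m * f4 y = 0

lemma E1_hasDerivAt (m α : ℝ) (f f1 f2 f3 f4 : ℝ → ℝ) (y : ℝ)
    (h1 : HasDerivAt f (f1 y) y) (h2 : HasDerivAt f1 (f2 y) y)
    (h3 : HasDerivAt f2 (f3 y) y) (h4 : HasDerivAt f3 (f4 y) y)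
    (hfpos : 0 < f y)
    (hODE : α * (f y - y * f1 y) + m * f y ^ (m - 1) * f1 y * f3 y + f y ^ m * f4 y = 0) :
    HasDerivAt
      (fun y => α * (f y * f1 y - 1 / 2 * y * f1 y ^ 2) + f y ^ m * f2 y * f3 y)
      (α / 2 * f1 y ^ 2 + f y ^ m * f3 y ^ 2) y := by
  have hP : HasDerivAt (fun y => f y ^ m) (f1 y * m * f y ^ (m - 1)) y :=
    h1.rpow_const (Or.inl hfpos.ne')
  have hT1 : HasDerivAt (fun y => α * (f y * f1 y - 1 / 2 * y * f1 y ^ 2))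
      (α * ((f1 y * f1 y + f y * f2 y) -
        (1 * (1 / 2) * f1 y ^ 2 + (1 / 2 * y) * (2 * f1 y ^ 1 * f2 y)))) y := by
    have := ((h1.mul h2).sub
      (((hasDerivAt_id y).const_mul (1/2:ℝ)).mul (h2.pow 2))).const_mul α
    refine this.congr_deriv ?_
    simp only [id_eq, Pi.pow_apply]
    ring
  have hT2 : HasDerivAt (fun y => f y ^ m * f2 y * f3 y)
      (((f1 y * m * f y ^ (m - 1)) * f2 y + f y ^ m * f3 y) * f3 y
        + f y ^ m * f2 y * f4 y) y := (hP.mul h3).mul h4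
  have := hT1.add hT2
  refine this.congr_deriv ?_
  have h := hODE
  generalize f y ^ m = P at h ⊢
  generalize f y ^ (m-1) = Q at h ⊢
  linear_combination (f2 y) * h

theorem stmt10 (m α : ℝ) (hm0 : 0 < m) (hm4 : m ≤ 4) (hα : 0 < α)
    (I : Set ℝ) (hI : IsOpen I) (hIsub : I ⊆ Ioi 0)
    (f f1 f2 f3 f4 : ℝ → ℝ)
    (hd1 : ∀ y ∈ I, HasDerivAt f (f1 y) y)
    (hd2 : ∀ y ∈ I, HasDerivAt f1 (f2 y) y)
    (hd3 : ∀ y ∈ I, HasDerivAt f2 (f3 y) y)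
    (hd4 : ∀ y ∈ I, HasDerivAt f3 (f4 y) y)
    (hc : ContinuousOn f4 I)
    (hpos : ∀ y ∈ I, 0 < f y)
    (hODE : ProfileODE m α I f f1 f3 f4) :
    (∀ y ∈ I, HasDerivAt
      (fun y => α * (f y * f1 y - 1 / 2 * y * f1 y ^ 2) + f y ^ m * f2 y * f3 y)
      (α / 2 * f1 y ^ 2 + f y ^ m * f3 y ^ 2) y) ∧
    (∀ (Y κ : ℝ) (g g1 g2 g3 g4 : ℝ → ℝ), 0 < Y →
      C4On (Ico 0 Y) g g1 g2 g3 g4 →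
      (∀ y ∈ Ico (0 : ℝ) Y, 0 < g y) →
      ProfileODE m α (Ioo 0 Y) g g1 g3 g4 →
      g 0 = 1 → g1 0 = 0 → g2 0 = κ → g3 0 = 0 →
      Tendsto (fun y => α * (g y * g1 y - 1 / 2 * y * g1 y ^ 2) + g y ^ m * g2 y * g3 y)
        (𝓝[>] 0) (𝓝 0) ∧
      ∀ y ∈ Ioo (0 : ℝ) Y,
        0 < α * (g y * g1 y - 1 / 2 * y * g1 y ^ 2) + g y ^ m * g2 y * g3 y) := by
  constructor
  · intro y hy
    exact E1_hasDerivAt m α f f1 f2 f3 f4 y (hd1 y hy) (hd2 y hy) (hd3 y hy) (hd4 y hy)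
      (hpos y hy) (hODE y hy)
  · intro Y κ g g1 g2 g3 g4 hY hC4 hgpos hgODE hg0 hg10 hg20 hg30
    obtain ⟨hD1, hD2, hD3, hD4, _⟩ := hC4
    set E : ℝ → ℝ :=
      fun y => α * (g y * g1 y - 1 / 2 * y * g1 y ^ 2) + g y ^ m * g2 y * g3 y with hE
    have hIco : Ioo (0:ℝ) Y ⊆ Ico 0 Y := Ioo_subset_Ico_self
    -- real derivatives on the interior
    have hg1' : ∀ y ∈ Ioo (0:ℝ) Y, HasDerivAt g (g1 y) y := fun y hy =>
      (hD1 y (hIco hy)).hasDerivAt (Ico_mem_nhds hy.1 hy.2)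
    have hg2' : ∀ y ∈ Ioo (0:ℝ) Y, HasDerivAt g1 (g2 y) y := fun y hy =>
      (hD2 y (hIco hy)).hasDerivAt (Ico_mem_nhds hy.1 hy.2)
    have hg3' : ∀ y ∈ Ioo (0:ℝ) Y, HasDerivAt g2 (g3 y) y := fun y hy =>
      (hD3 y (hIco hy)).hasDerivAt (Ico_mem_nhds hy.1 hy.2)
    have hg4' : ∀ y ∈ Ioo (0:ℝ) Y, HasDerivAt g3 (g4 y) y := fun y hy =>
      (hD4 y (hIco hy)).hasDerivAt (Ico_mem_nhds hy.1 hy.2)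
    have hEderiv : ∀ y ∈ Ioo (0:ℝ) Y,
        HasDerivAt E (α / 2 * g1 y ^ 2 + g y ^ m * g3 y ^ 2) y := fun y hy =>
      E1_hasDerivAt m α g g1 g2 g3 g4 y (hg1' y hy) (hg2' y hy) (hg3' y hy) (hg4' y hy)
        (hgpos y (hIco hy)) (hgODE y hy)
    -- continuity of E on Ico 0 Y
    have hcg : ContinuousOn g (Ico 0 Y) := fun y hy => (hD1 y hy).continuousWithinAt
    have hcg1 : ContinuousOn g1 (Ico 0 Y) := fun y hy => (hD2 y hy).continuousWithinAt
    have hcg2 : ContinuousOn g2 (Ico 0 Y) := fun y hy => (hD3 y hy).continuousWithinAt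
    have hcg3 : ContinuousOn g3 (Ico 0 Y) := fun y hy => (hD4 y hy).continuousWithinAt
    have hcgm : ContinuousOn (fun y => g y ^ m) (Ico 0 Y) :=
      hcg.rpow_const fun y hy => Or.inl (hgpos y hy).ne'
    have hcE : ContinuousOn E (Ico 0 Y) :=
      ((continuousOn_const.mul ((hcg.mul hcg1).sub
        ((continuousOn_const.mul continuousOn_id).mul (hcg1.pow 2)))).add
        ((hcgm.mul hcg2).mul hcg3))
    have hE0 : E 0 = 0 := by
      simp only [hE, hg0, hg10, hg30]
      norm_num
    constructor
    · -- the limit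
      have h0mem : (0:ℝ) ∈ Ico (0:ℝ) Y := ⟨le_refl 0, hY⟩
      have := (hcE 0 h0mem).tendsto
      rw [hE0] at this
      have hmono : 𝓝[Ioo (0:ℝ) Y] (0:ℝ) ≤ 𝓝[Ico (0:ℝ) Y] (0:ℝ) := nhdsWithin_mono _ hIco
      have := this.comp (α := ℝ) (tendsto_id.mono_left hmono)
      rw [nhdsWithin_Ioo_eq_nhdsGT hY] at this
      exact this
    · -- positivity
      intro y hy
      have hIccsub : Icc (0:ℝ) y ⊆ Ico 0 Y := fun z hz => ⟨hz.1, lt_of_le_of_lt hz.2 hy.2⟩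
      have hIoosub : Ioo (0:ℝ) y ⊆ Ioo 0 Y := Ioo_subset_Ioo le_rfl hy.2.le
      have hmonoE : MonotoneOn E (Icc 0 y) := by
        apply monotoneOn_of_deriv_nonneg (convex_Icc 0 y) (hcE.mono hIccsub)
        · intro z hz
          rw [interior_Icc] at hz
          exact ((hEderiv z (hIoosub hz)).differentiableAt).differentiableWithinAt
        · intro z hz
          rw [interior_Icc] at hz
          rw [(hEderiv z (hIoosub hz)).deriv]
          have := (hgpos z (hIco (hIoosub hz)))
          positivity
      have hEy_nonneg : 0 ≤ E y := by
        have := hmonoE (left_mem_Icc.2 hy.1.le) (right_mem_Icc.2 hy.1.le) hy.1.le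
        rwa [hE0] at this
      rcases hEy_nonneg.lt_or_eq with h | h
      · exact h
      -- contradiction case : E y = 0
      exfalso
      have hEzero : ∀ z ∈ Ioo (0:ℝ) y, E z = 0 := by
        intro z hz
        have h1 : E 0 ≤ E z := hmonoE (left_mem_Icc.2 hy.1.le)
          ⟨hz.1.le, hz.2.le⟩ hz.1.le
        have h2 : E z ≤ E y := hmonoE ⟨hz.1.le, hz.2.le⟩
          (right_mem_Icc.2 hy.1.le) hz.2.le
        rw [hE0] at h1; rw [← h] at h2
        linarith
      have hg13 : ∀ z ∈ Ioo (0:ℝ) y, g1 z = 0 ∧ g3 z = 0 := by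
        intro z hz
        have hEloc : E =ᶠ[𝓝 z] fun _ => 0 :=
          eventually_of_mem (isOpen_Ioo.mem_nhds hz) hEzero
        have hzero : HasDerivAt E 0 z :=
          (hasDerivAt_const z (0:ℝ)).congr_of_eventuallyEq hEloc
        have := (hEderiv z (hIoosub hz)).unique hzero
        have hgz := hgpos z (hIco (hIoosub hz))
        have hgm : 0 < g z ^ m := Real.rpow_pos_of_pos hgz m
        have h1 : 0 ≤ α / 2 * g1 z ^ 2 := by positivity
        have h2 : 0 ≤ g z ^ m * g3 z ^ 2 := by positivity
        have hA : α / 2 * g1 z ^ 2 = 0 := by linarith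
        have hB : g z ^ m * g3 z ^ 2 = 0 := by linarith
        have hα2 : (0:ℝ) < α / 2 := by linarith
        constructor
        · have : g1 z ^ 2 = 0 := by
            rcases mul_eq_zero.1 hA with h' | h'
            · exact absurd h' hα2.ne'
            · exact h'
          exact pow_eq_zero_iff two_ne_zero |>.1 this
        · have : g3 z ^ 2 = 0 := by
            rcases mul_eq_zero.1 hB with h' | h'
            · exact absurd h' hgm.ne'
            · exact h'
          exact pow_eq_zero_iff two_ne_zero |>.1 this
      -- pick z = y/2
      have hy0 := hy.1
      set z := y / 2 with hzdef
      have hzmem : z ∈ Ioo (0:ℝ) y := ⟨by rw [hzdef]; linarith, by rw [hzdef]; linarith⟩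
      have hg1loc : g1 =ᶠ[𝓝 z] fun _ => 0 :=
        eventually_of_mem (isOpen_Ioo.mem_nhds hzmem) (fun w hw => (hg13 w hw).1)
      have hg3loc : g3 =ᶠ[𝓝 z] fun _ => 0 :=
        eventually_of_mem (isOpen_Ioo.mem_nhds hzmem) (fun w hw => (hg13 w hw).2)
      have hg2z : g2 z = 0 :=
        (hg2' z (hIoosub hzmem)).unique
          ((hasDerivAt_const z (0:ℝ)).congr_of_eventuallyEq hg1loc)
      have hg4z : g4 z = 0 :=
        (hg4' z (hIoosub hzmem)).unique
          ((hasDerivAt_const z (0:ℝ)).congr_of_eventuallyEq hg3loc)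
      have hODEz := hgODE z (hIoosub hzmem)
      have hg1z : g1 z = 0 := (hg13 z hzmem).1
      have hg3z : g3 z = 0 := (hg13 z hzmem).2
      rw [hg1z, hg3z, hg4z] at hODEz
      have hgz := hgpos z (hIco (hIoosub hzmem))
      have : α * g z = 0 := by linarith [hODEz]
      nlinarith
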